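/- Fix μ ∈ ℝ and let m(σ) = (σ/√(2π)) · exp(−μ²/(2σ²)) + μ · (1 − Φ(−μ/σ)) for σ > 0 be the expected ReLU activation E[max(Y,0)] of a Gaussian Y ~ N(μ, σ²) as a function of σ. Then the squared mean activation m(σ)² is differentiable at every σ > 0 with derivative 2 · m(σ) · (1/√(2π)) · exp(−μ²/(2σ²)). -/

import Mathlib

open MeasureTheory ProbabilityTheory Real

/-- The cumulative distribution function of the standard normal distribution. -/
noncomputable def stdGaussianCDF (x : ℝ) : ℝ :=
  (gaussianReal 0 1 (Set.Iic x)).toReal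

lemma stdGaussianCDF_eq (x : ℝ) :
    stdGaussianCDF x = ∫ t in Set.Iic x, gaussianPDFReal 0 1 t := by
  rw [stdGaussianCDF, gaussianReal_apply_eq_integral 0 one_ne_zero,
    ENNReal.toReal_ofReal]
  exact setIntegral_nonneg measurableSet_Iic fun t _ => gaussianPDFReal_nonneg 0 1 t

lemma continuous_gaussianPDFReal : Continuous (gaussianPDFReal 0 1) := by
  unfold gaussianPDFReal
  fun_prop

lemma hasDerivAt_stdGaussianCDF (x : ℝ) :
    HasDerivAt stdGaussianCDF (gaussianPDFReal 0 1 x) x := by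
  have hint : Integrable (gaussianPDFReal 0 1) := integrable_gaussianPDFReal 0 1
  have heq : ∀ y : ℝ, stdGaussianCDF y
      = stdGaussianCDF 0 + ∫ t in (0:ℝ)..y, gaussianPDFReal 0 1 t := by
    intro y
    have h := intervalIntegral.integral_Iic_sub_Iic (μ := volume)
      (f := gaussianPDFReal 0 1) (a := 0) (b := y) hint.integrableOn hint.integrableOn
    rw [stdGaussianCDF_eq, stdGaussianCDF_eq]
    linarith
  have h : HasDerivAt (fun y => stdGaussianCDF 0 + ∫ t in (0:ℝ)..y, gaussianPDFReal 0 1 t)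
      (gaussianPDFReal 0 1 x) x :=
    ((continuous_gaussianPDFReal.integral_hasStrictDerivAt 0 x).hasDerivAt).const_add _
  exact h.congr_of_eventuallyEq (Filter.Eventually.of_forall heq)

/-- For fixed `μ`, with
`m(σ) = (σ/√(2π)) exp(−μ²/(2σ²)) + μ (1 − Φ(−μ/σ))`, the squared mean
activation `m(σ)²` is differentiable at every `σ > 0` with derivative
`2 m(σ) (1/√(2π)) exp(−μ²/(2σ²))`. -/
theorem hasDerivAt_sq_expected_relu_stddev (μ : ℝ) (σ : ℝ) (hσ : 0 < σ) :
    HasDerivAt (fun s : ℝ =>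
        (s / Real.sqrt (2 * π) * Real.exp (-(μ ^ 2) / (2 * s ^ 2))
          + μ * (1 - stdGaussianCDF (-(μ / s)))) ^ 2)
      (2 * (σ / Real.sqrt (2 * π) * Real.exp (-(μ ^ 2) / (2 * σ ^ 2))
          + μ * (1 - stdGaussianCDF (-(μ / σ))))
        * (1 / Real.sqrt (2 * π) * Real.exp (-(μ ^ 2) / (2 * σ ^ 2)))) σ := by
  have hσ' : σ ≠ 0 := hσ.ne'
  have hsqrt : (0:ℝ) < Real.sqrt (2 * π) := by positivity
  -- inner exponent derivative
  have hinner : HasDerivAt (fun s : ℝ => -(μ ^ 2) / (2 * s ^ 2))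
      (μ ^ 2 / σ ^ 3) σ := by
    have h1 : HasDerivAt (fun s : ℝ => (s ^ 2)⁻¹) (-(2 * σ ^ 1) / (σ ^ 2) ^ 2) σ :=
      (hasDerivAt_pow 2 σ).inv (pow_ne_zero 2 hσ')
    have h2 := h1.const_mul (-(μ ^ 2) / 2)
    have hfun : (fun s : ℝ => -(μ ^ 2) / (2 * s ^ 2))
        = fun s : ℝ => (-(μ ^ 2) / 2) * (s ^ 2)⁻¹ := by
      funext s; ring
    rw [hfun]
    refine h2.congr_deriv ?_
    field_simp
  have hexp : HasDerivAt (fun s : ℝ => Real.exp (-(μ ^ 2) / (2 * s ^ 2)))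
      (Real.exp (-(μ ^ 2) / (2 * σ ^ 2)) * (μ ^ 2 / σ ^ 3)) σ := hinner.exp
  have hA : HasDerivAt (fun s : ℝ => s / Real.sqrt (2 * π) * Real.exp (-(μ ^ 2) / (2 * s ^ 2)))
      ((1 / Real.sqrt (2 * π)) * Real.exp (-(μ ^ 2) / (2 * σ ^ 2))
        + σ / Real.sqrt (2 * π) * (Real.exp (-(μ ^ 2) / (2 * σ ^ 2)) * (μ ^ 2 / σ ^ 3))) σ := by
    have hid : HasDerivAt (fun s : ℝ => s / Real.sqrt (2 * π)) (1 / Real.sqrt (2 * π)) σ := by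
      simpa using (hasDerivAt_id σ).div_const (Real.sqrt (2 * π))
    exact hid.mul hexp
  -- CDF part
  have hneg : HasDerivAt (fun s : ℝ => -(μ / s)) (μ / σ ^ 2) σ := by
    have h1 : HasDerivAt (fun s : ℝ => s⁻¹) (-(σ ^ 2)⁻¹) σ := hasDerivAt_inv hσ'
    have h2 := (h1.const_mul μ).neg
    have hfun : (fun s : ℝ => -(μ / s)) = fun s : ℝ => -(μ * s⁻¹) := by
      funext s; ring
    rw [hfun]
    refine h2.congr_deriv ?_
    field_simp
  have hcdf : HasDerivAt (fun s : ℝ => stdGaussianCDF (-(μ / s)))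
      (gaussianPDFReal 0 1 (-(μ / σ)) * (μ / σ ^ 2)) σ :=
    by have := (hasDerivAt_stdGaussianCDF (-(μ / σ))).comp σ hneg; exact this
  have hB : HasDerivAt (fun s : ℝ => μ * (1 - stdGaussianCDF (-(μ / s))))
      (μ * -(gaussianPDFReal 0 1 (-(μ / σ)) * (μ / σ ^ 2))) σ :=
    ((hcdf.const_sub 1)).const_mul μ
  have hm := hA.add hB
  have hpdf : gaussianPDFReal 0 1 (-(μ / σ))
      = (1 / Real.sqrt (2 * π)) * Real.exp (-(μ ^ 2) / (2 * σ ^ 2)) := by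
    unfold gaussianPDFReal
    simp only [NNReal.coe_one, mul_one, sub_zero, neg_sq, one_div]
    congr 1
    rw [div_pow]
    ring
  have hm' : HasDerivAt (fun s : ℝ =>
      s / Real.sqrt (2 * π) * Real.exp (-(μ ^ 2) / (2 * s ^ 2))
        + μ * (1 - stdGaussianCDF (-(μ / s))))
      (1 / Real.sqrt (2 * π) * Real.exp (-(μ ^ 2) / (2 * σ ^ 2))) σ := by
    refine hm.congr_deriv ?_
    rw [hpdf]
    have h3 : σ / Real.sqrt (2 * π) * (Real.exp (-(μ ^ 2) / (2 * σ ^ 2)) * (μ ^ 2 / σ ^ 3))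
        = μ * (1 / Real.sqrt (2 * π) * Real.exp (-(μ ^ 2) / (2 * σ ^ 2)) * (μ / σ ^ 2)) := by
      field_simp
    rw [h3]
    ring
  have := hm'.pow 2
  refine this.congr_deriv ?_
  ring
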